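/- Let γ > 0, ν ≥ 0 and b̄ ∈ ℝ, and set ā₁ = 2√(γν) − b̄ and ā₂ = −2√(γν) − b̄. Then ∫_ℝ min( ν − (h + b̄)²/(4γ), 0 ) dγ₁(h) = f₂₂₁ + f₂₂₂, where f₂₂₁ = −(1/(4γ))·( (ā₁ + 2b̄)·e^{−ā₁²/2}/√(2π) + ((b̄² + 1)/2)·erfc(ā₁/√2) ) + (ν/2)·erfc(ā₁/√2) and f₂₂₂ = −(1/(4γ))·( −(ā₂ + 2b̄)·e^{−ā₂²/2}/√(2π) + ((b̄² + 1)/2)·erfc(−ā₂/√2) ) + (ν/2)·erfc(−ā₂/√2). -/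

import Mathlib

open MeasureTheory ProbabilityTheory Real Set Filter

/-- The error function `erf x = (2/√π) ∫₀ˣ e^{-t²} dt`. -/
noncomputable def erf (x : ℝ) : ℝ := (2 / Real.sqrt π) * ∫ t in (0:ℝ)..x, Real.exp (-t ^ 2)

/-- The complementary error function `erfc x = 1 - erf x`. -/
noncomputable def erfc (x : ℝ) : ℝ := 1 - erf x

lemma aux_int_exp : Integrable (fun x : ℝ => Real.exp (-x^2/2)) := by
  have h := integrable_exp_neg_mul_sq (show (0:ℝ) < 1/2 by norm_num)
  have e : (fun x : ℝ => Real.exp (-(1/2:ℝ) * x^2)) = fun x : ℝ => Real.exp (-x^2/2) := by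
    funext x; ring_nf
  rwa [e] at h

lemma aux_int_xexp : Integrable (fun x : ℝ => x * Real.exp (-x^2/2)) := by
  have h := integrable_mul_exp_neg_mul_sq (show (0:ℝ) < 1/2 by norm_num)
  have e : (fun x : ℝ => x * Real.exp (-(1/2:ℝ) * x^2)) = fun x : ℝ => x * Real.exp (-x^2/2) := by
    funext x; ring_nf
  rwa [e] at h

lemma aux_int_x2exp : Integrable (fun x : ℝ => x^2 * Real.exp (-x^2/2)) := by
  have h := integrable_rpow_mul_exp_neg_mul_sq (show (0:ℝ) < 1/2 by norm_num)
    (show (-1:ℝ) < ((2:ℕ):ℝ) by norm_num)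
  have e : (fun x : ℝ => x ^ ((2:ℕ):ℝ) * Real.exp (-(1/2:ℝ) * x^2))
      = fun x : ℝ => x^2 * Real.exp (-x^2/2) := by
    funext x; rw [Real.rpow_natCast]; ring_nf
  rwa [e] at h

lemma aux_tendsto_sq : Tendsto (fun x : ℝ => -x^2/2) atTop atBot := by
  have h : Tendsto (fun x : ℝ => x^2/2) atTop atTop :=
    (tendsto_pow_atTop (two_ne_zero)).atTop_div_const (by norm_num)
  have := tendsto_neg_atTop_atBot.comp h
  refine this.congr fun x => ?_
  simp [Function.comp]; ring

lemma aux_tendsto_exp : Tendsto (fun x : ℝ => Real.exp (-x^2/2)) atTop (nhds 0) :=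
  Real.tendsto_exp_atBot.comp aux_tendsto_sq

lemma aux_tendsto_xexp : Tendsto (fun x : ℝ => x * Real.exp (-x^2/2)) atTop (nhds 0) := by
  have h := (rpow_mul_exp_neg_mul_sq_isLittleO_exp_neg (show (0:ℝ) < 1/2 by norm_num) 1)
  have h2 : Tendsto (fun x : ℝ => Real.exp (-(1/2:ℝ) * x)) atTop (nhds 0) := by
    apply Real.tendsto_exp_atBot.comp
    have : Tendsto (fun x : ℝ => (1/2:ℝ) * x) atTop atTop :=
      (tendsto_id.const_mul_atTop (by norm_num))
    have := tendsto_neg_atTop_atBot.comp this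
    refine this.congr fun x => ?_; simp [Function.comp]
  have h3 := h.tendsto_zero_of_tendsto h2
  refine h3.congr fun x => ?_
  rw [Real.rpow_one]; ring_nf

lemma aux_deriv_sq (x : ℝ) : HasDerivAt (fun y : ℝ => -y^2/2) (-x) x := by
  have h := ((hasDerivAt_pow 2 x).div_const 2).neg
  have e : (fun y : ℝ => -(y^2/2)) = fun y : ℝ => -y^2/2 := by funext y; ring
  rw [show (-fun x : ℝ => x ^ 2 / 2) = fun y : ℝ => -(y^2/2) from rfl, e] at h
  exact h.congr_deriv (by norm_num)

lemma aux_E1 (a : ℝ) : ∫ x in Set.Ioi a, x * Real.exp (-x^2/2) = Real.exp (-a^2/2) := by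
  have hd : ∀ x ∈ Set.Ici a, HasDerivAt (fun y : ℝ => -Real.exp (-y^2/2))
      (x * Real.exp (-x^2/2)) x := by
    intro x _
    have h := ((aux_deriv_sq x).exp).neg
    refine h.congr_deriv ?_
    ring
  have := MeasureTheory.integral_Ioi_of_hasDerivAt_of_tendsto' hd
    aux_int_xexp.integrableOn (by simpa using aux_tendsto_exp.neg)
  rw [this]; ring

lemma aux_E2 (a : ℝ) :
    ∫ x in Set.Ioi a, (x^2 - 1) * Real.exp (-x^2/2) = a * Real.exp (-a^2/2) := by
  have hd : ∀ x ∈ Set.Ici a, HasDerivAt (fun y : ℝ => -(y * Real.exp (-y^2/2)))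
      ((x^2 - 1) * Real.exp (-x^2/2)) x := by
    intro x _
    have h := ((hasDerivAt_id x).mul ((aux_deriv_sq x).exp)).neg
    refine h.congr_deriv ?_
    simp only [id]; ring
  have hint : IntegrableOn (fun x : ℝ => (x^2 - 1) * Real.exp (-x^2/2)) (Set.Ioi a) := by
    exact ((aux_int_x2exp.sub aux_int_exp).congr
      (Filter.Eventually.of_forall fun x => by simp only [Pi.sub_apply]; ring)).integrableOn
  have := MeasureTheory.integral_Ioi_of_hasDerivAt_of_tendsto' hd hint
    (by simpa using aux_tendsto_xexp.neg)
  rw [this]; ring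

lemma aux_E0 (a : ℝ) :
    ∫ x in Set.Ioi a, Real.exp (-x^2/2) = Real.sqrt (π/2) * erfc (a / Real.sqrt 2) := by
  have sqrt2_pos : (0:ℝ) < Real.sqrt 2 := Real.sqrt_pos.2 (by norm_num)
  have sqrtpi_pos : (0:ℝ) < Real.sqrt π := Real.sqrt_pos.2 Real.pi_pos
  -- total integral
  have htot : ∫ x : ℝ, Real.exp (-x^2/2) = Real.sqrt (2*π) := by
    have h := integral_gaussian (1/2 : ℝ)
    have e : (fun x : ℝ => Real.exp (-(1/2:ℝ) * x^2)) = fun x : ℝ => Real.exp (-x^2/2) := by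
      funext x; ring_nf
    rw [e] at h
    rw [h]; congr 1; rw [div_div_eq_mul_div]; ring_nf
  have hIoi0 : ∫ x in Set.Ioi (0:ℝ), Real.exp (-x^2/2) = Real.sqrt (2*π) / 2 := by
    have h := integral_gaussian_Ioi (1/2 : ℝ)
    have e : (fun x : ℝ => Real.exp (-(1/2:ℝ) * x^2)) = fun x : ℝ => Real.exp (-x^2/2) := by
      funext x; ring_nf
    rw [e] at h
    rw [h]; congr 2; rw [div_div_eq_mul_div]; ring_nf
  -- interval piece via substitution
  have hsub : ∫ x in (0:ℝ)..a, Real.exp (-x^2/2)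
      = Real.sqrt 2 * ((Real.sqrt π / 2) * erf (a / Real.sqrt 2)) := by
    have h := intervalIntegral.integral_comp_div (a := (0:ℝ)) (b := a)
      (c := Real.sqrt 2) (fun t => Real.exp (-t^2)) sqrt2_pos.ne'
    have e : (fun x : ℝ => Real.exp (-(x / Real.sqrt 2)^2)) = fun x : ℝ => Real.exp (-x^2/2) := by
      funext x
      congr 1
      rw [div_pow, Real.sq_sqrt (by norm_num : (0:ℝ) ≤ 2)]
      ring
    rw [e] at h
    rw [h, zero_div, erf, smul_eq_mul]
    field_simp
  -- split Ioi a
  have hsplit : ∫ x in Set.Ioi a, Real.exp (-x^2/2)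
      = (∫ x in Set.Ioi (0:ℝ), Real.exp (-x^2/2)) - ∫ x in (0:ℝ)..a, Real.exp (-x^2/2) := by
    have h1 := intervalIntegral.integral_Iic_add_Ioi (b := a)
      (aux_int_exp.integrableOn) (aux_int_exp.integrableOn) (μ := volume)
    have h2 := intervalIntegral.integral_Iic_add_Ioi (b := (0:ℝ))
      (aux_int_exp.integrableOn) (aux_int_exp.integrableOn) (μ := volume)
    have h3 := intervalIntegral.integral_Iic_sub_Iic (a := (0:ℝ)) (b := a)
      (aux_int_exp.integrableOn) (aux_int_exp.integrableOn) (μ := volume)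
    linarith
  rw [hsplit, hIoi0, hsub, erfc]
  have h2π : Real.sqrt (2*π) = Real.sqrt 2 * Real.sqrt π :=
    Real.sqrt_mul (by norm_num) π
  have h22 : Real.sqrt 2 * Real.sqrt 2 = 2 := Real.mul_self_sqrt (by norm_num)
  have hπ2' : Real.sqrt (π/2) = Real.sqrt 2 * Real.sqrt π / 2 := by
    rw [Real.sqrt_div Real.pi_pos.le 2, eq_div_iff (two_ne_zero),
      div_mul_eq_mul_div, div_eq_iff sqrt2_pos.ne']
    linear_combination (-Real.sqrt π) * h22
  rw [h2π, hπ2']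
  ring

lemma aux_tail (γ b ν a : ℝ) (hγ : 0 < γ) :
    ∫ x in Set.Ioi a, (ν - (x + b)^2/(4*γ)) * ((Real.sqrt (2*π))⁻¹ * Real.exp (-x^2/2))
      = -(1/(4*γ)) * ((a + 2*b) * Real.exp (-a^2/2) / Real.sqrt (2*π)
          + ((b^2+1)/2) * erfc (a / Real.sqrt 2)) + (ν/2) * erfc (a / Real.sqrt 2) := by
  have sqrt2π_pos : (0:ℝ) < Real.sqrt (2*π) :=
    Real.sqrt_pos.2 (by positivity)
  set s : ℝ := (Real.sqrt (2*π))⁻¹ with hs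
  have hpt : ∀ x ∈ Set.Ioi a, (ν - (x + b)^2/(4*γ)) * (s * Real.exp (-x^2/2))
      = (s * (ν - (b^2+1)/(4*γ))) * Real.exp (-x^2/2)
        + ((-(s * b/(2*γ))) * (x * Real.exp (-x^2/2))
        + (-(s/(4*γ))) * ((x^2-1) * Real.exp (-x^2/2))) := by
    intro x _
    field_simp
    ring
  rw [MeasureTheory.setIntegral_congr_fun measurableSet_Ioi hpt]
  have int2 : Integrable (fun x : ℝ => (x^2-1) * Real.exp (-x^2/2)) :=
    (aux_int_x2exp.sub aux_int_exp).congr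
      (Filter.Eventually.of_forall fun x => by simp only [Pi.sub_apply]; ring)
  have Ia : IntegrableOn (fun x : ℝ =>
      (s * (ν - (b^2+1)/(4*γ))) * Real.exp (-x^2/2)) (Set.Ioi a) :=
    (aux_int_exp.const_mul _).integrableOn
  have Ib : IntegrableOn (fun x : ℝ =>
      (-(s * b/(2*γ))) * (x * Real.exp (-x^2/2))) (Set.Ioi a) :=
    (aux_int_xexp.const_mul _).integrableOn
  have Ic : IntegrableOn (fun x : ℝ =>
      (-(s/(4*γ))) * ((x^2-1) * Real.exp (-x^2/2))) (Set.Ioi a) :=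
    (int2.const_mul _).integrableOn
  have Ibc : IntegrableOn (fun x : ℝ =>
      (-(s * b/(2*γ))) * (x * Real.exp (-x^2/2))
        + (-(s/(4*γ))) * ((x^2-1) * Real.exp (-x^2/2))) (Set.Ioi a) := Ib.add Ic
  rw [MeasureTheory.integral_add Ia Ibc, MeasureTheory.integral_add Ib Ic,
    MeasureTheory.integral_const_mul, MeasureTheory.integral_const_mul,
    MeasureTheory.integral_const_mul, aux_E0, aux_E1, aux_E2]
  have hss : s * Real.sqrt (π/2) = 1/2 := by
    have h2π : Real.sqrt (2*π) = Real.sqrt 2 * Real.sqrt π := Real.sqrt_mul (by norm_num) π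
    have h22 : Real.sqrt 2 * Real.sqrt 2 = 2 := Real.mul_self_sqrt (by norm_num)
    have sqrt2_pos : (0:ℝ) < Real.sqrt 2 := Real.sqrt_pos.2 (by norm_num)
    have sqrtpi_pos : (0:ℝ) < Real.sqrt π := Real.sqrt_pos.2 Real.pi_pos
    have hπ2' : Real.sqrt (π/2) = Real.sqrt 2 * Real.sqrt π / 2 := by
      rw [Real.sqrt_div Real.pi_pos.le 2, eq_div_iff (two_ne_zero),
        div_mul_eq_mul_div, div_eq_iff sqrt2_pos.ne']
      linear_combination (-Real.sqrt π) * h22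
    rw [hs, h2π, hπ2', mul_inv]
    field_simp
  have hdiv : ∀ c : ℝ, c / Real.sqrt (2*π) = c * s := fun c => div_eq_mul_inv c _
  rw [hdiv]
  linear_combination ((ν - (b^2+1)/(4*γ)) * erfc (a / Real.sqrt 2)) * hss

lemma aux_intQ (γ b ν : ℝ) (hγ : 0 < γ) :
    Integrable (fun x : ℝ =>
      (ν - (x + b)^2/(4*γ)) * ((Real.sqrt (2*π))⁻¹ * Real.exp (-x^2/2))) := by
  have hγ' : (4:ℝ)*γ ≠ 0 := by positivity
  have e : (fun x : ℝ => (ν - (x + b)^2/(4*γ)) * ((Real.sqrt (2*π))⁻¹ * Real.exp (-x^2/2)))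
      = fun x : ℝ => ((Real.sqrt (2*π))⁻¹ * (ν - b^2/(4*γ))) * Real.exp (-x^2/2)
        + (((-((Real.sqrt (2*π))⁻¹ * b/(2*γ)))) * (x * Real.exp (-x^2/2))
        + (-((Real.sqrt (2*π))⁻¹/(4*γ))) * (x^2 * Real.exp (-x^2/2))) := by
    funext x; field_simp; ring
  rw [e]
  exact (aux_int_exp.const_mul _).add
    ((aux_int_xexp.const_mul _).add (aux_int_x2exp.const_mul _))

/-- The shifted Gaussian integral giving `f₂₂₁` and `f₂₂₂` at the first level of lifting:
`∫ min(ν - (h + b̄)²/(4γ), 0) dγ₁(h) = f₂₂₁ + f₂₂₂` in closed form. -/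
theorem stmt7 (γ ν bbar : ℝ) (hγ : 0 < γ) (hν : 0 ≤ ν)
    (a₁ a₂ f221 f222 : ℝ)
    (ha₁ : a₁ = 2 * Real.sqrt (γ * ν) - bbar)
    (ha₂ : a₂ = -(2 * Real.sqrt (γ * ν)) - bbar)
    (hf221 : f221 = -(1 / (4 * γ)) *
        ((a₁ + 2 * bbar) * Real.exp (-a₁ ^ 2 / 2) / Real.sqrt (2 * π)
          + ((bbar ^ 2 + 1) / 2) * erfc (a₁ / Real.sqrt 2))
      + (ν / 2) * erfc (a₁ / Real.sqrt 2))
    (hf222 : f222 = -(1 / (4 * γ)) *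
        (-((a₂ + 2 * bbar) * Real.exp (-a₂ ^ 2 / 2) / Real.sqrt (2 * π))
          + ((bbar ^ 2 + 1) / 2) * erfc (-a₂ / Real.sqrt 2))
      + (ν / 2) * erfc (-a₂ / Real.sqrt 2)) :
    ∫ h : ℝ, min (ν - (h + bbar) ^ 2 / (4 * γ)) 0 ∂(gaussianReal 0 1) = f221 + f222 := by
  have h4γ : (0:ℝ) < 4*γ := by linarith
  set Q : ℝ → ℝ := fun x =>
    (ν - (x + bbar)^2/(4*γ)) * ((Real.sqrt (2*π))⁻¹ * Real.exp (-x^2/2)) with hQ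
  -- Step 1: unfold the Gaussian measure
  have hmeas : Measurable fun x => (gaussianPDFReal 0 1 x).toNNReal :=
    (measurable_gaussianPDFReal 0 1).real_toNNReal
  have step1 : ∫ h : ℝ, min (ν - (h + bbar) ^ 2 / (4 * γ)) 0 ∂(gaussianReal 0 1)
      = ∫ x : ℝ, ((Real.sqrt (2*π))⁻¹ * Real.exp (-x^2/2))
          * min (ν - (x + bbar) ^ 2 / (4 * γ)) 0 := by
    rw [gaussianReal_of_var_ne_zero 0 one_ne_zero]
    have hd : volume.withDensity (gaussianPDF 0 1)
        = volume.withDensity (fun x => ((gaussianPDFReal 0 1 x).toNNReal : ENNReal)) := rfl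
    rw [hd, integral_withDensity_eq_integral_smul hmeas]
    congr 1; funext x
    rw [NNReal.smul_def, smul_eq_mul, Real.coe_toNNReal _ (gaussianPDFReal_nonneg 0 1 x)]
    congr 1
    simp [gaussianPDFReal]
  -- pointwise splitting
  have key : ∀ x : ℝ,
      ((Real.sqrt (2*π))⁻¹ * Real.exp (-x^2/2)) * min (ν - (x + bbar) ^ 2 / (4 * γ)) 0
      = Set.indicator (Set.Ici a₁) Q x + Set.indicator (Set.Iio a₂) Q x := by
    intro x
    have hr : (0:ℝ) ≤ 2 * Real.sqrt (γ * ν) := by positivity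
    have hr2 : (2 * Real.sqrt (γ * ν))^2 = 4*(γ*ν) := by
      rw [mul_pow, Real.sq_sqrt (mul_nonneg hγ.le hν)]; ring
    rcases le_or_gt a₁ x with h1 | h1
    · have hxl : x ∉ Set.Iio a₂ := by
        simp only [Set.mem_Iio, not_lt]; rw [ha₂]; rw [ha₁] at h1; linarith
      have hge : 2 * Real.sqrt (γ * ν) ≤ x + bbar := by rw [ha₁] at h1; linarith
      have hsq : 4*γ*ν ≤ (x + bbar)^2 := by nlinarith
      have hmin : min (ν - (x + bbar) ^ 2 / (4 * γ)) 0 = ν - (x + bbar) ^ 2 / (4 * γ) := by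
        apply min_eq_left
        have : ν ≤ (x + bbar)^2 / (4*γ) := by rw [le_div_iff₀ h4γ]; linarith
        linarith
      rw [hmin, Set.indicator_of_mem (Set.mem_Ici.mpr h1) Q, Set.indicator_of_notMem hxl Q,
        add_zero]
      simp only [hQ]
      ring
    · rcases lt_or_ge x a₂ with h2 | h2
      · have hxl : x ∉ Set.Ici a₁ := by simp only [Set.mem_Ici, not_le]; exact h1
        have hle : x + bbar ≤ -(2 * Real.sqrt (γ * ν)) := by rw [ha₂] at h2; linarith
        have hsq : 4*γ*ν ≤ (x + bbar)^2 := by nlinarith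
        have hmin : min (ν - (x + bbar) ^ 2 / (4 * γ)) 0 = ν - (x + bbar) ^ 2 / (4 * γ) := by
          apply min_eq_left
          have : ν ≤ (x + bbar)^2 / (4*γ) := by rw [le_div_iff₀ h4γ]; linarith
          linarith
        rw [hmin, Set.indicator_of_notMem hxl Q, Set.indicator_of_mem (Set.mem_Iio.mpr h2) Q,
          zero_add]
        simp only [hQ]
        ring
      · have hx1 : x ∉ Set.Ici a₁ := by simp only [Set.mem_Ici, not_le]; exact h1
        have hx2 : x ∉ Set.Iio a₂ := by simp only [Set.mem_Iio, not_lt]; exact h2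
        have hub : x + bbar ≤ 2 * Real.sqrt (γ * ν) := by rw [ha₁] at h1; linarith
        have hlb : -(2 * Real.sqrt (γ * ν)) ≤ x + bbar := by rw [ha₂] at h2; linarith
        have hsq : (x + bbar)^2 ≤ 4*γ*ν := by nlinarith
        have hmin : min (ν - (x + bbar) ^ 2 / (4 * γ)) 0 = 0 := by
          apply min_eq_right
          have : (x + bbar)^2 / (4*γ) ≤ ν := by rw [div_le_iff₀ h4γ]; linarith
          linarith
        rw [hmin, Set.indicator_of_notMem hx1 Q, Set.indicator_of_notMem hx2 Q]
        ring
  have hQint : Integrable Q := aux_intQ γ bbar ν hγ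
  rw [step1]
  have step2 : ∫ x : ℝ, ((Real.sqrt (2*π))⁻¹ * Real.exp (-x^2/2))
        * min (ν - (x + bbar) ^ 2 / (4 * γ)) 0
      = (∫ x in Set.Ici a₁, Q x) + ∫ x in Set.Iio a₂, Q x := by
    rw [← MeasureTheory.integral_indicator measurableSet_Ici,
      ← MeasureTheory.integral_indicator measurableSet_Iio,
      ← MeasureTheory.integral_add (hQint.indicator measurableSet_Ici)
        (hQint.indicator measurableSet_Iio)]
    exact MeasureTheory.integral_congr_ae (Filter.Eventually.of_forall key)
  rw [step2]
  have hright : ∫ x in Set.Ici a₁, Q x = f221 := by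
    rw [MeasureTheory.integral_Ici_eq_integral_Ioi, hQ, aux_tail γ bbar ν a₁ hγ, hf221]
  have hleft : ∫ x in Set.Iio a₂, Q x = f222 := by
    rw [← MeasureTheory.integral_Iic_eq_integral_Iio]
    have h := integral_comp_neg_Ioi (-a₂) Q
    rw [neg_neg] at h
    rw [← h]
    have hcong : ∀ x ∈ Set.Ioi (-a₂), Q (-x)
        = (ν - (x + (-bbar))^2/(4*γ)) * ((Real.sqrt (2*π))⁻¹ * Real.exp (-x^2/2)) := by
      intro x _
      simp only [hQ, neg_sq]
      ring_nf
    rw [MeasureTheory.setIntegral_congr_fun measurableSet_Ioi hcong,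
      aux_tail γ (-bbar) ν (-a₂) hγ, hf222]
    simp only [neg_sq]
    ring
  rw [hright, hleft]
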